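/- arXiv:2301.02159 — 2 statements merged into one kernel-verified Lean document; each statement's English description precedes it below -/
import Mathlib

section
/- Let T = [x₁, …, x_{N+1}] be a nondegenerate N-simplex in ℝ^N with diameter h_T and inradius ρ_T. For any (N−2)-dimensional subsimplex S and the dihedral angle θ_{ST} along S (the angle between the two facets of T containing S, measured in the Euclidean metric), one has sin θ_{ST} ≥ 2 ρ_T / h_T. -/
noncomputable section

open Metric

/-- Diameter of the simplex with vertices `x`. -/
def simplexDiam {N : ℕ} (x : Fin (N + 1) → EuclideanSpace ℝ (Fin N)) : ℝ :=
  Metric.diam (convexHull ℝ (Set.range x))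

/-- Inradius: the supremum of the radii of balls contained in the simplex. -/
def simplexInradius {N : ℕ} (x : Fin (N + 1) → EuclideanSpace ℝ (Fin N)) : ℝ :=
  sSup {r : ℝ | ∃ c : EuclideanSpace ℝ (Fin N),
    Metric.closedBall c r ⊆ convexHull ℝ (Set.range x)}

/-- **Lower bound for the sine of a dihedral angle** (Lemma `lemma:anglebound`).
For a nondegenerate `N`-simplex `T = [x₀, …, x_N]` (`N ≥ 2`), the dihedral angle
`θ_{ST}` along the `(N−2)`-subsimplex `S = [x₂, …, x_N]` between the facets
`F₁ = [x₀, x₂, …, x_N]` and `F₂ = [x₁, x₂, …, x_N]`, defined by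
`sin θ_{ST} = dist(x₀, aff F₂) / dist(x₀, aff S)`, satisfies
`sin θ_{ST} ≥ 2 ρ_T / h_T`. -/
theorem sin_dihedral_angle_ge (N : ℕ) (hN : 2 ≤ N)
    (x : Fin (N + 1) → EuclideanSpace ℝ (Fin N))
    (hx : AffineIndependent ℝ x) :
    2 * simplexInradius x / simplexDiam x ≤
      Metric.infDist (x 0) ((affineSpan ℝ (x '' {i | i ≠ 0}) : AffineSubspace ℝ _) : Set _) /
        Metric.infDist (x 0)
          ((affineSpan ℝ (x '' {i | i ≠ 0 ∧ i ≠ 1}) : AffineSubspace ℝ _) : Set _) := by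
  classical
  set T : Set (EuclideanSpace ℝ (Fin N)) := convexHull ℝ (Set.range x) with hTdef
  set P : AffineSubspace ℝ (EuclideanSpace ℝ (Fin N)) :=
    affineSpan ℝ (x '' {i | i ≠ 0}) with hPdef
  set Q : AffineSubspace ℝ (EuclideanSpace ℝ (Fin N)) :=
    affineSpan ℝ (x '' {i | i ≠ 0 ∧ i ≠ 1}) with hQdef
  set a := Metric.infDist (x 0) (P : Set (EuclideanSpace ℝ (Fin N))) with hadef
  set b := Metric.infDist (x 0) (Q : Set (EuclideanSpace ℝ (Fin N))) with hbdef
  -- index facts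
  have hval1 : ((1 : Fin (N + 1)) : ℕ) = 1 := by
    rw [Fin.val_one']; exact Nat.mod_eq_of_lt (by omega)
  have hone : (1 : Fin (N + 1)) ≠ 0 := by
    intro h; rw [h] at hval1; simp at hval1
  set j2 : Fin (N + 1) := ⟨2, by omega⟩ with hj2
  have hj20 : j2 ≠ 0 := by simp [hj2, Fin.ext_iff]
  have hj21 : j2 ≠ 1 := by
    intro h; rw [← h] at hval1; simp [hj2] at hval1
  -- memberships
  have hx1P : x 1 ∈ (P : Set (EuclideanSpace ℝ (Fin N))) :=
    subset_affineSpan ℝ _ ⟨1, hone, rfl⟩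
  have hx2Q : x j2 ∈ (Q : Set (EuclideanSpace ℝ (Fin N))) :=
    subset_affineSpan ℝ _ ⟨j2, ⟨hj20, hj21⟩, rfl⟩
  have hx0P : x 0 ∉ (P : Set (EuclideanSpace ℝ (Fin N))) := by
    have h := hx.notMem_affineSpan_diff 0 Set.univ
    have hs : (Set.univ \ {0} : Set (Fin (N + 1))) = {i | i ≠ 0} := by ext i; simp
    rw [hs] at h
    exact h
  have hQP : Q ≤ P := affineSpan_mono ℝ (Set.image_mono (f := x) fun i hi => hi.1)
  have hx0Q : x 0 ∉ (Q : Set (EuclideanSpace ℝ (Fin N))) := fun h => hx0P (hQP h)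
  have hx0T : x 0 ∈ T := subset_convexHull ℝ _ ⟨0, rfl⟩
  have hx2T : x j2 ∈ T := subset_convexHull ℝ _ ⟨j2, rfl⟩
  have hTbdd : Bornology.IsBounded T :=
    ((Set.finite_range x).isCompact_convexHull ℝ).isBounded
  -- b > 0 and b ≤ h
  have hbpos : 0 < b := by
    have hcl : IsClosed (Q : Set (EuclideanSpace ℝ (Fin N))) := Q.closed_of_finiteDimensional
    exact (hcl.notMem_iff_infDist_pos ⟨x j2, hx2Q⟩).1 hx0Q
  have hble : b ≤ simplexDiam x := by
    calc b ≤ dist (x 0) (x j2) := Metric.infDist_le_dist_of_mem hx2Q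
    _ ≤ simplexDiam x := Metric.dist_le_diam_of_mem hTbdd hx0T hx2T
  have hhpos : 0 < simplexDiam x := lt_of_lt_of_le hbpos hble
  have hanon : 0 ≤ a := Metric.infDist_nonneg
  -- hyperplane normal vector
  have hPtop : P ≠ ⊤ := fun h => hx0P (by simp [h])
  have hdirtop : P.direction ≠ ⊤ := fun h =>
    hPtop ((AffineSubspace.direction_eq_top_iff_of_nonempty ⟨x 1, hx1P⟩).1 h)
  obtain ⟨v, hvP, hv0⟩ : ∃ v ∈ P.directionᗮ, v ≠ 0 := by
    have hne : P.directionᗮ ≠ ⊥ := fun h => hdirtop (Submodule.orthogonal_eq_bot_iff.1 h)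
    rcases Submodule.exists_mem_ne_zero_of_ne_bot hne with ⟨v, hv, h0⟩
    exact ⟨v, hv, h0⟩
  set u : EuclideanSpace ℝ (Fin N) := ‖v‖⁻¹ • v with hu
  have hu1 : ‖u‖ = 1 := norm_smul_inv_norm hv0
  have huP : u ∈ P.directionᗮ := Submodule.smul_mem _ _ hvP
  set g : EuclideanSpace ℝ (Fin N) → ℝ := fun y => inner ℝ u y with hg
  -- g is constant on P
  have hgP : ∀ q ∈ (P : Set (EuclideanSpace ℝ (Fin N))), g q = g (x 1) := by
    intro q hq
    have hmem : q -ᵥ x 1 ∈ P.direction := AffineSubspace.vsub_mem_direction hq hx1P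
    have h0 : (inner ℝ u (q - x 1) : ℝ) = 0 := by
      have := (Submodule.mem_orthogonal' P.direction u).1 huP _ hmem
      simpa [vsub_eq_sub] using this
    rw [inner_sub_right] at h0
    simp only [hg]
    linarith
  -- the slab
  set m : ℝ := min (g (x 1)) (g (x 0)) with hm
  set M : ℝ := max (g (x 1)) (g (x 0)) with hM
  have hglin : IsLinearMap ℝ g :=
    ⟨fun y z => inner_add_right u y z, fun c y => real_inner_smul_right u y c⟩
  have hTsub : T ⊆ {y | m ≤ g y} ∩ {y | g y ≤ M} := by
    apply convexHull_min _ ((convex_halfSpace_ge hglin m).inter (convex_halfSpace_le hglin M))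
    rintro y ⟨i, rfl⟩
    by_cases hi : i = 0
    · subst hi
      refine ⟨?_, ?_⟩
      · show m ≤ g (x 0); exact min_le_right _ _
      · show g (x 0) ≤ M; exact le_max_right _ _
    · have hxiP : x i ∈ (P : Set (EuclideanSpace ℝ (Fin N))) :=
        subset_affineSpan ℝ _ ⟨i, hi, rfl⟩
      refine ⟨?_, ?_⟩
      · show m ≤ g (x i); rw [hgP _ hxiP]; exact min_le_left _ _
      · show g (x i) ≤ M; rw [hgP _ hxiP]; exact le_max_left _ _
  have hMm : M - m ≤ a := by
    have habs : M - m = |g (x 0) - g (x 1)| := by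
      rw [hM, hm, max_sub_min_eq_abs, abs_sub_comm]
    have hbound : ∀ q ∈ (P : Set (EuclideanSpace ℝ (Fin N))),
        |g (x 0) - g (x 1)| ≤ dist (x 0) q := by
      intro q hq
      have h1 : g (x 0) - g (x 1) = inner ℝ u (x 0 - q) := by
        have hq1 := hgP q hq
        rw [inner_sub_right]
        simp only [hg] at hq1 ⊢
        linarith
      rw [h1]
      calc |(inner ℝ u (x 0 - q) : ℝ)| ≤ ‖u‖ * ‖x 0 - q‖ := abs_real_inner_le_norm u _
      _ = dist (x 0) q := by rw [hu1, one_mul, dist_eq_norm]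
    rw [habs, hadef]
    by_contra hcon
    push_neg at hcon
    rcases (Metric.infDist_lt_iff ⟨x 1, hx1P⟩).1 hcon with ⟨q, hq, hlt⟩
    exact absurd hlt (not_lt.2 (hbound q hq))
  -- every admissible radius is at most a/2
  set A : Set ℝ := {r : ℝ | ∃ c : EuclideanSpace ℝ (Fin N),
    Metric.closedBall c r ⊆ convexHull ℝ (Set.range x)} with hA
  have hAle : ∀ r ∈ A, r ≤ a / 2 := by
    rintro r ⟨c, hc⟩
    rcases lt_or_ge r 0 with hr | hr
    · linarith
    · have h1 : c + r • u ∈ T := by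
        apply hc
        rw [Metric.mem_closedBall, dist_eq_norm]
        simp [norm_smul, hu1, abs_of_nonneg hr]
      have h2 : c - r • u ∈ T := by
        apply hc
        rw [Metric.mem_closedBall, dist_eq_norm]
        simp [norm_smul, hu1, abs_of_nonneg hr]
      have huu : (inner ℝ u u : ℝ) = 1 := by
        rw [real_inner_self_eq_norm_sq, hu1]; norm_num
      have hg1 : g (c + r • u) = g c + r := by
        simp only [hg, inner_add_right, real_inner_smul_right, huu, mul_one]
      have hg2 : g (c - r • u) = g c - r := by
        simp only [hg, inner_sub_right, real_inner_smul_right, huu, mul_one]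
      have h1' : g (c + r • u) ≤ M := (hTsub h1).2
      have h2' : m ≤ g (c - r • u) := (hTsub h2).1
      rw [hg1] at h1'
      rw [hg2] at h2'
      linarith
  have h0A : (0 : ℝ) ∈ A := by
    refine ⟨x 0, ?_⟩
    rw [Metric.closedBall_zero]
    exact Set.singleton_subset_iff.2 hx0T
  have hrho1 : 0 ≤ simplexInradius x := le_csSup ⟨a / 2, hAle⟩ h0A
  have hrho2 : simplexInradius x ≤ a / 2 := csSup_le ⟨0, h0A⟩ hAle
  -- conclude
  rw [div_le_div_iff₀ hhpos hbpos]
  nlinarith [mul_le_mul_of_nonneg_left hble hanon]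

end
end

section
/- Let g(t) be a smooth family of Riemannian metrics with ∂g/∂t = σ. Let (n̄(t), τ̄(t)) and (n(t), τ(t)) be two g(t)-orthonormal pairs spanning the same 2-plane, related by τ = τ̄ cos θ + n̄ sin θ and n = −τ̄ sin θ + n̄ cos θ, with n and n̄ at all times g(t)-orthogonal to fixed hypersurfaces F and F̄ respectively. Then, whenever θ(t) ∈ (0, π), θ̇ = (1/2) σ(n, τ) − (1/2) σ(n̄, τ̄). -/
open Matrix

noncomputable section

/-- The bilinear form of a matrix: `bilin M v w = vᵀ M w`. -/
def bilin {N : ℕ} (M : Matrix (Fin N) (Fin N) ℝ) (v w : Fin N → ℝ) : ℝ :=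
  v ⬝ᵥ M *ᵥ w

/-- Partial derivative `∂ᵢ f` at `x`. -/
def pd {N : ℕ} (i : Fin N) (f : (Fin N → ℝ) → ℝ) (x : Fin N → ℝ) : ℝ :=
  fderiv ℝ f x (Pi.single i 1)

/-- Christoffel symbols `Γˡᵢⱼ` of a metric field `g` (in coordinates). -/
def chr {N : ℕ} (g : (Fin N → ℝ) → Matrix (Fin N) (Fin N) ℝ) (x : Fin N → ℝ)
    (l i j : Fin N) : ℝ :=
  (1 / 2) * ∑ m, (g x)⁻¹ l m *
    (pd i (fun y => g y j m) x + pd j (fun y => g y i m) x - pd m (fun y => g y i j) x)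

/-- Covariant derivative `(∇ₖ σ)ᵢⱼ` of a `(0,2)`-tensor field `σ`. -/
def cd2 {N : ℕ} (g σ : (Fin N → ℝ) → Matrix (Fin N) (Fin N) ℝ) (x : Fin N → ℝ)
    (k i j : Fin N) : ℝ :=
  pd k (fun y => σ y i j) x - ∑ m, chr g x m k i * σ x m j - ∑ m, chr g x m k j * σ x i m

/-- Covariant derivative `(∇ₖ α)ⱼ` of a one-form field `α`. -/
def cd1 {N : ℕ} (g : (Fin N → ℝ) → Matrix (Fin N) (Fin N) ℝ)
    (α : (Fin N → ℝ) → Fin N → ℝ) (x : Fin N → ℝ) (k j : Fin N) : ℝ :=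
  pd k (fun y => α y j) x - ∑ m, chr g x m k j * α x m

/-- Covariant derivative of a vector field: `(∇_Y X)ˡ`. -/
def cdV {N : ℕ} (g : (Fin N → ℝ) → Matrix (Fin N) (Fin N) ℝ)
    (Y X : (Fin N → ℝ) → Fin N → ℝ) (x : Fin N → ℝ) (l : Fin N) : ℝ :=
  ∑ j, Y x j * pd j (fun y => X y l) x + ∑ i, ∑ j, chr g x l i j * Y x j * X x i

/-- Covariant divergence of a `(0,2)`-tensor field: `(div σ)ⱼ = gᵏⁱ (∇ₖ σ)ᵢⱼ`. -/
def divT {N : ℕ} (g σ : (Fin N → ℝ) → Matrix (Fin N) (Fin N) ℝ) (x : Fin N → ℝ)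
    (j : Fin N) : ℝ :=
  ∑ k, ∑ i, (g x)⁻¹ k i * cd2 g σ x k i j

/-- Double covariant divergence `div div σ` of a `(0,2)`-tensor field. -/
def divdivT {N : ℕ} (g σ : (Fin N → ℝ) → Matrix (Fin N) (Fin N) ℝ) (x : Fin N → ℝ) : ℝ :=
  ∑ k, ∑ j, (g x)⁻¹ k j * cd1 g (fun y => divT g σ y) x k j

/-- Ricci curvature `Rᵢⱼ` in coordinates. -/
def ricci {N : ℕ} (g : (Fin N → ℝ) → Matrix (Fin N) (Fin N) ℝ) (x : Fin N → ℝ)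
    (i j : Fin N) : ℝ :=
  ∑ k, pd k (fun y => chr g y k i j) x - ∑ k, pd i (fun y => chr g y k k j) x
    + ∑ k, ∑ l, chr g x k k l * chr g x l i j - ∑ k, ∑ l, chr g x k i l * chr g x l k j

/-- Scalar curvature `R = gⁱʲ Rᵢⱼ`. -/
def scal {N : ℕ} (g : (Fin N → ℝ) → Matrix (Fin N) (Fin N) ℝ) (x : Fin N → ℝ) : ℝ :=
  ∑ i, ∑ j, (g x)⁻¹ i j * ricci g x i j

/-- `g`-trace of a symmetric matrix: `Tr_g a = tr (g⁻¹ a)`. -/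
def trg {N : ℕ} (g a : Matrix (Fin N) (Fin N) ℝ) : ℝ :=
  Matrix.trace (g⁻¹ * a)

/-- `g`-inner product of two symmetric matrices: `⟨a, b⟩_g = tr (g⁻¹ a g⁻¹ b)`. -/
def ipm {N : ℕ} (g a b : Matrix (Fin N) (Fin N) ℝ) : ℝ :=
  Matrix.trace (g⁻¹ * a * (g⁻¹ * b))

/-- Time derivative `σ = ∂g/∂t` of a time-dependent metric field, at time `t`. -/
def tderiv {N : ℕ} (g : ℝ → (Fin N → ℝ) → Matrix (Fin N) (Fin N) ℝ) (t : ℝ)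
    (y : Fin N → ℝ) : Matrix (Fin N) (Fin N) ℝ :=
  Matrix.of fun i j => deriv (fun s => g s y i j) t


lemma bilin_expand {N : ℕ} (M : Matrix (Fin N) (Fin N) ℝ) (v w : Fin N → ℝ) :
    bilin M v w = ∑ i, ∑ j, v i * (M i j * w j) := by
  simp [bilin, dotProduct, mulVec, Finset.mul_sum]

lemma bilin_comm {N : ℕ} {M : Matrix (Fin N) (Fin N) ℝ} (h : M.IsSymm) (v w : Fin N → ℝ) :
    bilin M v w = bilin M w v := by
  rw [bilin_expand, bilin_expand, Finset.sum_comm]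
  refine Finset.sum_congr rfl fun j _ => Finset.sum_congr rfl fun i _ => ?_
  have := congrFun (congrFun h.eq j) i
  simp only [Matrix.transpose_apply] at this
  rw [← this]; ring

lemma bilin_right_lin {N : ℕ} (M : Matrix (Fin N) (Fin N) ℝ) (v : Fin N → ℝ) (a b : ℝ)
    (w₁ w₂ : Fin N → ℝ) :
    bilin M v (a • w₁ + b • w₂) = a * bilin M v w₁ + b * bilin M v w₂ := by
  simp only [bilin_expand, Finset.mul_sum, ← Finset.sum_add_distrib]
  refine Finset.sum_congr rfl fun i _ => Finset.sum_congr rfl fun j _ => ?_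
  simp only [Pi.add_apply, Pi.smul_apply, smul_eq_mul]; ring

lemma bilin_left_lin {N : ℕ} (M : Matrix (Fin N) (Fin N) ℝ) (v : Fin N → ℝ) (a b : ℝ)
    (w₁ w₂ : Fin N → ℝ) :
    bilin M (a • w₁ + b • w₂) v = a * bilin M w₁ v + b * bilin M w₂ v := by
  simp only [bilin_expand, Finset.mul_sum, ← Finset.sum_add_distrib]
  refine Finset.sum_congr rfl fun i _ => Finset.sum_congr rfl fun j _ => ?_
  simp only [Pi.add_apply, Pi.smul_apply, smul_eq_mul]; ring

lemma bilin_rot {N : ℕ} {M : Matrix (Fin N) (Fin N) ℝ} (h : M.IsSymm)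
    (x₁ x₂ y₁ y₂ : ℝ) (p q : Fin N → ℝ) :
    bilin M (x₁ • p + x₂ • q) (y₁ • p + y₂ • q)
      = x₁ * y₁ * bilin M p p + (x₁ * y₂ + x₂ * y₁) * bilin M p q
        + x₂ * y₂ * bilin M q q := by
  rw [bilin_right_lin, bilin_left_lin, bilin_left_lin, bilin_comm h q p]
  ring

lemma bilin_zero_right {N : ℕ} (M : Matrix (Fin N) (Fin N) ℝ) (v : Fin N → ℝ) :
    bilin M v (0 : Fin N → ℝ) = 0 := by
  simp [bilin]

lemma hasDerivAt_bilin {N : ℕ} (g : ℝ → Matrix (Fin N) (Fin N) ℝ) (v w : ℝ → Fin N → ℝ) (t : ℝ)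
    (hg : ∀ i j, DifferentiableAt ℝ (fun s => g s i j) t)
    (hv : ∀ i, DifferentiableAt ℝ (fun s => v s i) t)
    (hw : ∀ i, DifferentiableAt ℝ (fun s => w s i) t) :
    HasDerivAt (fun s => bilin (g s) (v s) (w s))
      (bilin (Matrix.of fun i j => deriv (fun s => g s i j) t) (v t) (w t)
        + bilin (g t) (fun i => deriv (fun s => v s i) t) (w t)
        + bilin (g t) (v t) (fun j => deriv (fun s => w s j) t)) t := by
  have key : ∀ i j, HasDerivAt (fun s => v s i * (g s i j * w s j))
      (deriv (fun s => v s i) t * (g t i j * w t j)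
        + v t i * (deriv (fun s => g s i j) t * w t j + g t i j * deriv (fun s => w s j) t)) t :=
    fun i j => ((hv i).hasDerivAt).mul (((hg i j).hasDerivAt).mul ((hw j).hasDerivAt))
  have h := HasDerivAt.sum (u := Finset.univ) (fun i _ =>
    HasDerivAt.sum (u := Finset.univ) (fun j _ => key i j))
  have heq : (fun s => bilin (g s) (v s) (w s)) = fun s => ∑ i, ∑ j, v s i * (g s i j * w s j) := by
    funext s; rw [bilin_expand]
  simp only [Finset.sum_fn] at h
  rw [heq]
  refine h.congr_deriv (Eq.symm ?_)
  simp only [bilin_expand, Matrix.of_apply]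
  rw [← Finset.sum_add_distrib, ← Finset.sum_add_distrib]
  refine Finset.sum_congr rfl fun i _ => ?_
  rw [← Finset.sum_add_distrib, ← Finset.sum_add_distrib]
  refine Finset.sum_congr rfl fun j _ => ?_
  ring

lemma mem_of_bilin_eq_zero {N : ℕ} (M : Matrix (Fin N) (Fin N) ℝ) (n x : Fin N → ℝ)
    (F : Submodule ℝ (Fin N → ℝ)) (hdim : Module.finrank ℝ F = N - 1)
    (hunit : bilin M n n = 1) (hF : ∀ w ∈ F, bilin M n w = 0)
    (hx : bilin M n x = 0) : x ∈ F := by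
  set φ : (Fin N → ℝ) →ₗ[ℝ] ℝ :=
    { toFun := fun w => bilin M n w
      map_add' := fun w₁ w₂ => by simp [bilin, mulVec_add, dotProduct_add]
      map_smul' := fun c w => by simp [bilin, mulVec_smul, dotProduct_smul] }
    with hφdef
  have hφ : ∀ w, φ w = bilin M n w := fun w => rfl
  have hφn : φ n = 1 := hunit
  have hle : F ≤ LinearMap.ker φ := fun w hw => by
    simpa [LinearMap.mem_ker, hφ] using hF w hw
  have h1 : (1:ℝ) ∈ LinearMap.range φ := ⟨n, hφn⟩
  have hr1 : 1 ≤ Module.finrank ℝ (LinearMap.range φ) := by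
    rw [Nat.one_le_iff_ne_zero]
    intro h0
    rw [Submodule.finrank_eq_zero.mp h0] at h1
    simp at h1
  have hr2 : Module.finrank ℝ (LinearMap.range φ) ≤ 1 := by
    have := Submodule.finrank_le (LinearMap.range φ)
    rwa [Module.finrank_self] at this
  have hrn := LinearMap.finrank_range_add_finrank_ker φ
  rw [Module.finrank_fin_fun] at hrn
  have hFeq : F = LinearMap.ker φ :=
    Submodule.eq_of_le_of_finrank_le hle (by omega)
  rw [hFeq, LinearMap.mem_ker, hφ]
  exact hx


/-- **Evolution of angles under metric deformation** (Lemma `lemma:angledot`),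
pointwise.  Let `g(t)` be a family of metrics with `σ = ∂g/∂t`, let
`(n̄(t), τ̄(t))` and `(n(t), τ(t))` be `g(t)`-orthonormal pairs spanning a common
2-plane and related by `τ = τ̄ cos θ + n̄ sin θ`, `n = −τ̄ sin θ + n̄ cos θ`, with
`n` (resp. `n̄`) at all times `g(t)`-orthogonal to a fixed hyperplane `F`
(resp. `F̄`).  Then, whenever `θ(t) ∈ (0, π)`,
`θ̇ = (1/2) σ(n,τ) − (1/2) σ(n̄,τ̄)`. -/
theorem angle_evolution
    (N : ℕ) (g : ℝ → Matrix (Fin N) (Fin N) ℝ)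
    (nbar τbar n τv : ℝ → Fin N → ℝ) (θ : ℝ → ℝ)
    (F Fbar : Submodule ℝ (Fin N → ℝ))
    (hdimF : Module.finrank ℝ F = N - 1)
    (hdimFbar : Module.finrank ℝ Fbar = N - 1)
    (hg : ∀ i j, Differentiable ℝ fun s => g s i j)
    (hnbar : ∀ i, Differentiable ℝ fun s => nbar s i)
    (hτbar : ∀ i, Differentiable ℝ fun s => τbar s i)
    (hn : ∀ i, Differentiable ℝ fun s => n s i)
    (hτv : ∀ i, Differentiable ℝ fun s => τv s i)
    (hθ : Differentiable ℝ θ)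
    (hsym : ∀ t, (g t).IsSymm) (hpos : ∀ t, (g t).PosDef)
    (hnbarU : ∀ t, bilin (g t) (nbar t) (nbar t) = 1)
    (hτbarU : ∀ t, bilin (g t) (τbar t) (τbar t) = 1)
    (hnτbar : ∀ t, bilin (g t) (nbar t) (τbar t) = 0)
    (hnU : ∀ t, bilin (g t) (n t) (n t) = 1)
    (hτU : ∀ t, bilin (g t) (τv t) (τv t) = 1)
    (hnτ : ∀ t, bilin (g t) (n t) (τv t) = 0)
    (hrotτ : ∀ t, τv t = Real.cos (θ t) • τbar t + Real.sin (θ t) • nbar t)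
    (hrotn : ∀ t, n t = (-Real.sin (θ t)) • τbar t + Real.cos (θ t) • nbar t)
    (hnF : ∀ t, ∀ w ∈ F, bilin (g t) (n t) w = 0)
    (hnbarFbar : ∀ t, ∀ w ∈ Fbar, bilin (g t) (nbar t) w = 0)
    (t : ℝ) (hθt : θ t ∈ Set.Ioo 0 Real.pi) :
    deriv θ t =
      (1 / 2) * bilin (Matrix.of fun i j => deriv (fun s => g s i j) t) (n t) (τv t)
        - (1 / 2) * bilin (Matrix.of fun i j => deriv (fun s => g s i j) t) (nbar t) (τbar t) := by
  -- notation
  have hgd : ∀ i j, DifferentiableAt ℝ (fun s => g s i j) t := fun i j => (hg i j).differentiableAt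
  have hnd : ∀ i, DifferentiableAt ℝ (fun s => n s i) t := fun i => (hn i).differentiableAt
  have hnbard : ∀ i, DifferentiableAt ℝ (fun s => nbar s i) t := fun i => (hnbar i).differentiableAt
  have hσsym : (Matrix.of fun i j => deriv (fun s => g s i j) t).IsSymm := by
    show _ = _
    ext i j
    simp only [Matrix.transpose_apply, Matrix.of_apply]
    have : (fun s => g s j i) = fun s => g s i j := by
      funext s
      have := congrFun (congrFun (hsym s).eq i) j
      simpa [Matrix.transpose_apply] using this
    rw [this]
  -- abbreviations (pure notation, via generalize-free `let`-style haves are avoided; use plain terms)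
  -- τ t ∈ F and τbar t ∈ Fbar
  have hmemτ : τv t ∈ F :=
    mem_of_bilin_eq_zero (g t) (n t) (τv t) F hdimF (hnU t) (hnF t) (hnτ t)
  have hmemτbar : τbar t ∈ Fbar :=
    mem_of_bilin_eq_zero (g t) (nbar t) (τbar t) Fbar hdimFbar (hnbarU t) (hnbarFbar t) (hnτbar t)
  -- derivative of unit conditions
  have hU : bilin (Matrix.of fun i j => deriv (fun s => g s i j) t) (nbar t) (nbar t)
      + bilin (g t) (fun i => deriv (fun s => nbar s i) t) (nbar t)
      + bilin (g t) (nbar t) (fun j => deriv (fun s => nbar s j) t) = 0 := by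
    have h1 := hasDerivAt_bilin g nbar nbar t hgd hnbard hnbard
    have he : (fun s => bilin (g s) (nbar s) (nbar s)) = fun _ => (1:ℝ) := funext hnbarU
    rw [he] at h1
    exact h1.unique (hasDerivAt_const t 1)
  have hV : bilin (Matrix.of fun i j => deriv (fun s => g s i j) t) (n t) (n t)
      + bilin (g t) (fun i => deriv (fun s => n s i) t) (n t)
      + bilin (g t) (n t) (fun j => deriv (fun s => n s j) t) = 0 := by
    have h1 := hasDerivAt_bilin g n n t hgd hnd hnd
    have he : (fun s => bilin (g s) (n s) (n s)) = fun _ => (1:ℝ) := funext hnU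
    rw [he] at h1
    exact h1.unique (hasDerivAt_const t 1)
  -- derivative of orthogonality to fixed hypersurfaces
  have hzero : (fun j => deriv (fun _ : ℝ => τv t j) t) = (0 : Fin N → ℝ) := by
    funext j; exact deriv_const t _
  have hzero' : (fun j => deriv (fun _ : ℝ => τbar t j) t) = (0 : Fin N → ℝ) := by
    funext j; exact deriv_const t _
  have hb3 : bilin (g t) (fun i => deriv (fun s => n s i) t) (τv t)
      = -(bilin (Matrix.of fun i j => deriv (fun s => g s i j) t) (n t) (τv t)) := by
    have h1 := hasDerivAt_bilin g n (fun _ => τv t) t hgd hnd (fun i => differentiableAt_const _)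
    rw [hzero, bilin_zero_right] at h1
    have he : (fun s => bilin (g s) (n s) (τv t)) = fun _ => (0:ℝ) :=
      funext fun s => hnF s (τv t) hmemτ
    rw [he] at h1
    have := h1.unique (hasDerivAt_const t 0)
    linarith
  have hb4 : bilin (g t) (fun i => deriv (fun s => nbar s i) t) (τbar t)
      = -(bilin (Matrix.of fun i j => deriv (fun s => g s i j) t) (nbar t) (τbar t)) := by
    have h1 := hasDerivAt_bilin g nbar (fun _ => τbar t) t hgd hnbard
      (fun i => differentiableAt_const _)
    rw [hzero', bilin_zero_right] at h1
    have he : (fun s => bilin (g s) (nbar s) (τbar t)) = fun _ => (0:ℝ) :=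
      funext fun s => hnbarFbar s (τbar t) hmemτbar
    rw [he] at h1
    have := h1.unique (hasDerivAt_const t 0)
    linarith
  -- normal-direction components
  have hb1 : bilin (g t) (fun i => deriv (fun s => nbar s i) t) (nbar t)
      = -(1/2) * bilin (Matrix.of fun i j => deriv (fun s => g s i j) t) (nbar t) (nbar t) := by
    have hc := bilin_comm (hsym t) (nbar t) (fun j => deriv (fun s => nbar s j) t)
    linarith [hU, hc]
  have hb2 : bilin (g t) (fun i => deriv (fun s => n s i) t) (n t)
      = -(1/2) * bilin (Matrix.of fun i j => deriv (fun s => g s i j) t) (n t) (n t) := by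
    have hc := bilin_comm (hsym t) (n t) (fun j => deriv (fun s => n s j) t)
    linarith [hV, hc]
  -- the main evolution equation for cos θ
  have hcosfun : (fun s => bilin (g s) (nbar s) (n s)) = fun s => Real.cos (θ s) := by
    funext s
    rw [hrotn s, bilin_right_lin, hnτbar s, hnbarU s]
    ring
  have eq5 : bilin (Matrix.of fun i j => deriv (fun s => g s i j) t) (nbar t) (n t)
      + bilin (g t) (fun i => deriv (fun s => nbar s i) t) (n t)
      + bilin (g t) (nbar t) (fun j => deriv (fun s => n s j) t)
      = -Real.sin (θ t) * deriv θ t := by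
    have h1 := hasDerivAt_bilin g nbar n t hgd hnbard hnd
    rw [hcosfun] at h1
    have h2 : HasDerivAt (fun s => Real.cos (θ s)) (-Real.sin (θ t) * deriv θ t) t :=
      (Real.hasDerivAt_cos (θ t)).comp t ((hθ t).hasDerivAt)
    exact h1.unique h2
  -- rotation expansions
  have hnbareq : nbar t = Real.cos (θ t) • n t + Real.sin (θ t) • τv t := by
    rw [hrotn t, hrotτ t]
    funext i
    simp only [Pi.add_apply, Pi.smul_apply, smul_eq_mul]
    linear_combination (-(Real.sin_sq_add_cos_sq (θ t))) * nbar t i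
  have hr1 : bilin (g t) (fun i => deriv (fun s => nbar s i) t) (n t)
      = (-Real.sin (θ t)) * bilin (g t) (fun i => deriv (fun s => nbar s i) t) (τbar t)
        + Real.cos (θ t) * bilin (g t) (fun i => deriv (fun s => nbar s i) t) (nbar t) := by
    rw [hrotn t, bilin_right_lin]
  have hr2 : bilin (g t) (nbar t) (fun j => deriv (fun s => n s j) t)
      = Real.cos (θ t) * bilin (g t) (fun i => deriv (fun s => n s i) t) (n t)
        + Real.sin (θ t) * bilin (g t) (fun i => deriv (fun s => n s i) t) (τv t) := by
    rw [bilin_comm (hsym t) (nbar t) (fun j => deriv (fun s => n s j) t), hnbareq,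
      bilin_right_lin]
  have hr3 : bilin (Matrix.of fun i j => deriv (fun s => g s i j) t) (nbar t) (n t)
      = (-Real.sin (θ t)) * bilin (Matrix.of fun i j => deriv (fun s => g s i j) t) (nbar t) (τbar t)
        + Real.cos (θ t) * bilin (Matrix.of fun i j => deriv (fun s => g s i j) t) (nbar t) (nbar t) := by
    rw [hrotn t, bilin_right_lin]
  have hcommσ : bilin (Matrix.of fun i j => deriv (fun s => g s i j) t) (τbar t) (nbar t)
      = bilin (Matrix.of fun i j => deriv (fun s => g s i j) t) (nbar t) (τbar t) :=
    bilin_comm hσsym _ _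
  have hA : bilin (Matrix.of fun i j => deriv (fun s => g s i j) t) (n t) (n t)
      = Real.sin (θ t) ^ 2 * bilin (Matrix.of fun i j => deriv (fun s => g s i j) t) (τbar t) (τbar t)
        - 2 * Real.sin (θ t) * Real.cos (θ t)
            * bilin (Matrix.of fun i j => deriv (fun s => g s i j) t) (nbar t) (τbar t)
        + Real.cos (θ t) ^ 2
            * bilin (Matrix.of fun i j => deriv (fun s => g s i j) t) (nbar t) (nbar t) := by
    rw [hrotn t, bilin_rot hσsym]
    linear_combination (-2 * Real.sin (θ t) * Real.cos (θ t)) * hcommσ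
  have hC : bilin (Matrix.of fun i j => deriv (fun s => g s i j) t) (n t) (τv t)
      = -(Real.sin (θ t) * Real.cos (θ t))
            * bilin (Matrix.of fun i j => deriv (fun s => g s i j) t) (τbar t) (τbar t)
        + (Real.cos (θ t) ^ 2 - Real.sin (θ t) ^ 2)
            * bilin (Matrix.of fun i j => deriv (fun s => g s i j) t) (nbar t) (τbar t)
        + Real.sin (θ t) * Real.cos (θ t)
            * bilin (Matrix.of fun i j => deriv (fun s => g s i j) t) (nbar t) (nbar t) := by
    rw [hrotn t, hrotτ t, bilin_rot hσsym]
    linear_combination (Real.cos (θ t) ^ 2 - Real.sin (θ t) ^ 2) * hcommσ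
  -- finish
  have hsin : Real.sin (θ t) ≠ 0 := ne_of_gt (Real.sin_pos_of_pos_of_lt_pi hθt.1 hθt.2)
  have pyth := Real.sin_sq_add_cos_sq (θ t)
  have hfin : Real.sin (θ t) * deriv θ t
      = Real.sin (θ t) *
        ((1 / 2) * bilin (Matrix.of fun i j => deriv (fun s => g s i j) t) (n t) (τv t)
          - (1 / 2) * bilin (Matrix.of fun i j => deriv (fun s => g s i j) t) (nbar t) (τbar t)) := by
    linear_combination eq5 - hr3 - hr1 - hr2 + Real.sin (θ t) * hb4 - Real.cos (θ t) * hb1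
      - Real.cos (θ t) * hb2 - Real.sin (θ t) * hb3 + (Real.cos (θ t) / 2) * hA
      + (Real.sin (θ t) / 2) * hC
      + (Real.cos (θ t) * bilin (Matrix.of fun i j => deriv (fun s => g s i j) t) (nbar t) (nbar t) / 2
          - Real.sin (θ t) * bilin (Matrix.of fun i j => deriv (fun s => g s i j) t) (nbar t) (τbar t) / 2)
          * pyth
  exact mul_left_cancel₀ hsin hfin

end
end
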